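/- For γ > 2 and 1 < λ < (γ√2)/(γ + √2 - 1), the inequality (γ² - 2γ - 1)(λ-1)² + 2(γ² - 1)(λ-1) - (γ-1)² < 0 holds. -/
import Mathlib

theorem stmt_8 (γ lam : ℝ) (hγ : 2 < γ) (hl1 : 1 < lam)
    (hl2 : lam < (γ * Real.sqrt 2) / (γ + Real.sqrt 2 - 1)) :
    (γ ^ 2 - 2 * γ - 1) * (lam - 1) ^ 2 + 2 * (γ ^ 2 - 1) * (lam - 1)
      - (γ - 1) ^ 2 < 0 := by
  set s := Real.sqrt 2 with hsdef
  have hs2 : s ^ 2 = 2 := Real.sq_sqrt (by norm_num)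
  have hs1 : 1 < s := by nlinarith [Real.sqrt_nonneg 2, hs2]
  have hslt : s < 3/2 := by nlinarith [hs2]
  have hden : 0 < γ + s - 1 := by linarith
  have key : lam * (γ + s - 1) < γ * s := by
    rw [lt_div_iff₀ hden] at hl2; linarith
  have ht : 0 < lam - 1 := by linarith
  have hu : 0 < (γ - 1) * (s - 1) - (lam - 1) * (γ + s - 1) := by nlinarith
  have hP : 0 < (γ + s - 1) * (γ ^ 2 - 2 * γ - 1) * (lam - 1)
      + (γ ^ 2 - 2 * γ - 1) * (γ - 1) * (s - 1) + 2 * (γ ^ 2 - 1) * (γ + s - 1) := by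
    rcases le_or_gt 0 (γ ^ 2 - 2 * γ - 1) with hA | hA
    · have h1 : 0 ≤ (γ + s - 1) * (γ ^ 2 - 2 * γ - 1) * (lam - 1) := by positivity
      nlinarith [mul_nonneg hA (by nlinarith : (0:ℝ) ≤ (γ - 1) * (s - 1))]
    · have hA1 : 0 < γ ^ 2 - 2 * γ := by nlinarith
      nlinarith [mul_neg_of_neg_of_pos hA hu,
        mul_pos (mul_pos hA1 (show (0:ℝ) < γ - 1 by linarith)) (show (0:ℝ) < s - 1 by linarith),
        mul_pos (show (0:ℝ) < γ - 1 by linarith) (show (0:ℝ) < s - 1 by linarith)]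
  have hq : (γ + s - 1) ^ 2 * ((γ ^ 2 - 2 * γ - 1) * (lam - 1) ^ 2 + 2 * (γ ^ 2 - 1) * (lam - 1)
      - (γ - 1) ^ 2)
      + ((γ - 1) * (s - 1) - (lam - 1) * (γ + s - 1)) *
        ((γ + s - 1) * (γ ^ 2 - 2 * γ - 1) * (lam - 1)
          + (γ ^ 2 - 2 * γ - 1) * (γ - 1) * (s - 1) + 2 * (γ ^ 2 - 1) * (γ + s - 1)) = 0 := by
    linear_combination (γ ^ 2 * (γ - 1) ^ 2) * hs2
  have hF : (γ + s - 1) ^ 2 * ((γ ^ 2 - 2 * γ - 1) * (lam - 1) ^ 2 + 2 * (γ ^ 2 - 1) * (lam - 1)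
      - (γ - 1) ^ 2) < 0 := by nlinarith [mul_pos hu hP]
  by_contra h
  push_neg at h
  nlinarith [mul_nonneg (le_of_lt (mul_pos hden hden)) h]
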